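/- Let G = C_2 ⊕ C_2 with generators e_1, e_2. The set of tame degrees of the monoid of zero-sum sequences B(G) is Ta(G) = {3}. -/
import Mathlib

/-- A minimal zero-sum sequence over the abelian group `G`: a nonempty zero-sum
multiset none of whose proper nonempty sub-multisets has sum zero. -/
def IsMinZeroSum {G : Type*} [AddCommGroup G] (S : Multiset G) : Prop :=
  S ≠ 0 ∧ S.sum = 0 ∧ ∀ T ≤ S, T ≠ 0 → T.sum = 0 → T = S

/-- A factorization of a zero-sum sequence `B` into atoms of `B(G)`. -/
def IsFactorization {G : Type*} [AddCommGroup G] (B : Multiset G)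
    (z : Multiset (Multiset G)) : Prop :=
  (∀ A ∈ z, IsMinZeroSum A) ∧ z.sum = B

/-- The usual distance between two factorizations. -/
noncomputable def factDist {G : Type*} [AddCommGroup G] (z z' : Multiset (Multiset G)) : ℕ :=
  letI := Classical.decEq (Multiset G)
  max (z - z').card (z' - z).card

/-- The catenary degree of `B ∈ B(G)`: the least `N` such that any two factorizations
of `B` can be concatenated by a chain of factorizations with consecutive distances `≤ N`. -/
noncomputable def catenaryDeg {G : Type*} [AddCommGroup G] (B : Multiset G) : ℕ :=
  sInf {N : ℕ | ∀ z z', IsFactorization B z → IsFactorization B z' →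
    Relation.ReflTransGen (fun x y => IsFactorization B y ∧ factDist x y ≤ N) z z'}

/-- The tame degree `t(A, U)` of `A ∈ B(G)` with respect to the atom `U`. -/
noncomputable def tameDeg {G : Type*} [AddCommGroup G] (A U : Multiset G) : ℕ :=
  sInf {N : ℕ | ∀ z, IsFactorization A z →
    (∃ z', IsFactorization A z' ∧ U ∈ z') →
    ∃ z', IsFactorization A z' ∧ U ∈ z' ∧ factDist z z' ≤ N}

/-- The set of (positive) tame degrees of `B(G)`. -/
noncomputable def TaSet (G : Type*) [AddCommGroup G] : Set ℕ :=
  {n | 0 < n ∧ ∃ A U : Multiset G, A.sum = 0 ∧ IsMinZeroSum U ∧ tameDeg A U = n}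

/-- The Davenport constant of `G`: the supremum of lengths of minimal zero-sum sequences. -/
noncomputable def davenport (G : Type*) [AddCommGroup G] : ℕ :=
  sSup {n : ℕ | ∃ A : Multiset G, IsMinZeroSum A ∧ A.card = n}

/-! ### Auxiliary material for `stmt10` -/

namespace Stmt10Aux

abbrev GG := ZMod 2 × ZMod 2
abbrev va : GG := (1,0)
abbrev vb : GG := (0,1)
abbrev vc : GG := (1,1)
abbrev mo : Multiset GG := {0}
abbrev mp : Multiset GG := {va, va}
abbrev mq : Multiset GG := {vb, vb}
abbrev mr : Multiset GG := {vc, vc}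
abbrev ms : Multiset GG := {va, vb, vc}

def olist : List (Multiset GG) := [mo, mp, mq, mr, ms]

lemma isMin_iff (S : Multiset GG) : IsMinZeroSum S ↔
    (S ≠ 0 ∧ S.sum = 0 ∧ ∀ T ∈ S.powerset, T ≠ 0 → T.sum = 0 → T = S) := by
  unfold IsMinZeroSum
  simp only [Multiset.mem_powerset]

lemma classify (S : Multiset GG) :
    IsMinZeroSum S ↔ S = mo ∨ S = mp ∨ S = mq ∨ S = mr ∨ S = ms := by
  constructor
  · rintro ⟨h0, hsum, hmin⟩
    by_cases hz : (0:GG) ∈ S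
    · exact Or.inl (hmin {0} (Multiset.singleton_le.2 hz) (by decide) (by simp)).symm
    have hdi : ∀ x : GG, 2 ≤ S.count x → ({x,x} : Multiset GG) ≤ S := by
      intro x hx
      rw [Multiset.le_iff_count]
      intro v
      by_cases hv : v = x
      · subst hv
        have : Multiset.count v ({v,v} : Multiset GG) = 2 := by
          simp [Multiset.insert_eq_cons]
        omega
      · have : Multiset.count v ({x,x} : Multiset GG) = 0 := by
          simp [Multiset.insert_eq_cons, Multiset.count_cons, Multiset.count_singleton, hv]
        omega
    by_cases hca : 2 ≤ S.count va
    · exact Or.inr <| Or.inl (hmin _ (hdi va hca) (by decide) (by decide)).symm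
    by_cases hcb : 2 ≤ S.count vb
    · exact Or.inr <| Or.inr <| Or.inl (hmin _ (hdi vb hcb) (by decide) (by decide)).symm
    by_cases hcc : 2 ≤ S.count vc
    · exact Or.inr <| Or.inr <| Or.inr <| Or.inl
        (hmin _ (hdi vc hcc) (by decide) (by decide)).symm
    · have hS3 : S ≤ ms := by
        rw [Multiset.le_iff_count]
        intro x
        have h4 : x = 0 ∨ x = va ∨ x = vb ∨ x = vc :=
          (by decide : ∀ y : GG, y = 0 ∨ y = va ∨ y = vb ∨ y = vc) x
        have hc1 : Multiset.count va ms = 1 := by decide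
        have hc2 : Multiset.count vb ms = 1 := by decide
        have hc3 : Multiset.count vc ms = 1 := by decide
        rcases h4 with rfl|rfl|rfl|rfl
        · simp [Multiset.count_eq_zero_of_notMem hz]
        · omega
        · omega
        · omega
      have key : ∀ T ∈ (ms : Multiset GG).powerset, T ≠ 0 → T.sum = 0 → T = ms := by decide
      exact Or.inr <| Or.inr <| Or.inr <| Or.inr (key S (Multiset.mem_powerset.2 hS3) h0 hsum)
  · rintro (rfl|rfl|rfl|rfl|rfl) <;> (rw [isMin_iff]; decide)

lemma atom_mem {V : Multiset GG} (h : IsMinZeroSum V) : V ∈ olist := by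
  rcases (classify V).mp h with rfl|rfl|rfl|rfl|rfl <;> simp [olist]

set_option maxRecDepth 8000 in
lemma pairU : ∀ U ∈ olist, ∀ Y ∈ olist, ∀ V ∈ olist, ∀ W ∈ olist,
    V + W = U + Y → U = V ∨ U = W := by decide

lemma factDist_eq (z z' : Multiset (Multiset GG)) :
    factDist z z' = max (z - z').card (z' - z).card := by
  unfold factDist
  have h : Classical.decEq (Multiset GG) = (inferInstance : DecidableEq (Multiset GG)) :=
    Subsingleton.elim _ _
  rw [h]

lemma factDist_self (z : Multiset (Multiset GG)) : factDist z z = 0 := by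
  rw [factDist_eq]; simp

lemma factDist_add_le (d1 d2 t : Multiset (Multiset GG)) :
    factDist (d1 + t) (d2 + t) ≤ max d1.card d2.card := by
  classical
  rw [factDist_eq]
  rw [add_tsub_add_eq_tsub_right, add_tsub_add_eq_tsub_right]
  exact max_le_max (Multiset.card_le_card tsub_le_self) (Multiset.card_le_card tsub_le_self)

lemma count_msum (x : GG) (z : Multiset (Multiset GG)) :
    (z.sum).count x = (z.map (Multiset.count x)).sum := by
  induction z using Multiset.induction with
  | empty => simp
  | cons a t ih => simp [ih]

lemma mem_msum {x : GG} {z : Multiset (Multiset GG)} (h : x ∈ z.sum) : ∃ V ∈ z, x ∈ V := by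
  induction z using Multiset.induction with
  | empty => simp at h
  | cons a t ih =>
    rw [Multiset.sum_cons, Multiset.mem_add] at h
    rcases h with h|h
    · exact ⟨a, Multiset.mem_cons_self a t, h⟩
    · obtain ⟨V, hV, hx⟩ := ih h
      exact ⟨V, Multiset.mem_cons_of_mem hV, hx⟩

lemma sum_indicator {α : Type*} [DecidableEq α] (s : Multiset α) (a : α) :
    (s.map fun V => if V = a then (1:ℕ) else 0).sum = s.count a := by
  induction s using Multiset.induction with
  | empty => simp
  | cons b t ih =>
    by_cases hb : b = a
    · simp [hb, ih, Multiset.count_cons, add_comm]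
    · simp [hb, Ne.symm hb, ih, Multiset.count_cons]

lemma trip_eq (x y w : GG) : ({x,x} : Multiset GG) + {y,y} + {w,w} = {x,y,w} + {x,y,w} := by
  ext v
  rw [Multiset.count_add, Multiset.count_add, Multiset.count_add]
  simp only [Multiset.insert_eq_cons, Multiset.count_cons, Multiset.count_singleton]
  split_ifs <;> omega

/-- Lower bound: two factorizations, one avoiding the atom `U`, one containing it,
are at distance at least 3. -/
lemma dist_ge {A U : Multiset GG} (hU : IsMinZeroSum U) {z z' : Multiset (Multiset GG)}
    (hz : IsFactorization A z) (hz' : IsFactorization A z') (hUz : U ∉ z) (hUz' : U ∈ z') :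
    3 ≤ factDist z z' := by
  classical
  rw [factDist_eq]
  by_contra hlt
  push_neg at hlt
  obtain ⟨hec, hdc⟩ := max_lt_iff.mp hlt
  have hUd : U ∈ z' - z := by
    rw [← Multiset.count_pos, Multiset.count_sub, Multiset.count_eq_zero_of_notMem hUz]
    have := Multiset.count_pos.mpr hUz'
    omega
  have hsum_ed : (z - z').sum = (z' - z).sum := by
    have h1 : ((z - z') + (z ∩ z')).sum = A := by rw [Multiset.sub_add_inter]; exact hz.2
    have h2 : ((z' - z) + (z' ∩ z)).sum = A := by rw [Multiset.sub_add_inter]; exact hz'.2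
    rw [Multiset.sum_add] at h1 h2
    rw [Multiset.inter_comm] at h2
    rw [← h2] at h1
    exact add_right_cancel h1
  have hez : z - z' ≤ z := tsub_le_self
  have hdz : z' - z ≤ z' := tsub_le_self
  obtain ⟨d0, hd0⟩ := Multiset.exists_cons_of_mem hUd
  have hd0c : d0.card ≤ 1 := by
    have h := hdc
    rw [hd0, Multiset.card_cons] at h
    omega
  have hdsum : (z' - z).sum = U + d0.sum := by rw [hd0, Multiset.sum_cons]
  have hecases : (z - z').card = 0 ∨ (z - z').card = 1 ∨ (z - z').card = 2 := by omega
  rcases hecases with h|h|h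
  · -- z - z' = 0 : then U ≤ 0
    have he0 : z - z' = 0 := Multiset.card_eq_zero.mp h
    have hU0 : U ≤ (0 : Multiset GG) := by
      have : U ≤ (z' - z).sum := hdsum ▸ self_le_add_right U d0.sum
      rwa [← hsum_ed, he0, Multiset.sum_zero] at this
    exact hU.1 (Multiset.le_zero.mp hU0)
  · -- z - z' = {V} : then U ≤ V, so U = V ∈ z
    obtain ⟨V, hV⟩ := Multiset.card_eq_one.mp h
    have hVz : V ∈ z := Multiset.mem_of_le hez (by rw [hV]; simp)
    have hVatom := hz.1 V hVz
    have hsum2 : V = U + d0.sum := by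
      have := hsum_ed
      rw [hV, Multiset.sum_singleton, hdsum] at this
      exact this
    have hUV : U ≤ V := hsum2 ▸ self_le_add_right U d0.sum
    have : U = V := hVatom.2.2 U hUV hU.1 hU.2.1
    exact hUz (this ▸ hVz)
  · -- z - z' = {V, W}
    obtain ⟨V, W, hVW⟩ := Multiset.card_eq_two.mp h
    have hVz : V ∈ z := Multiset.mem_of_le hez (by rw [hVW]; simp)
    have hWz : W ∈ z := Multiset.mem_of_le hez (by rw [hVW]; simp)
    have hVatom := hz.1 V hVz
    have hWatom := hz.1 W hWz
    have hesum : (z - z').sum = V + W := by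
      rw [hVW]
      simp [Multiset.insert_eq_cons]
    rcases Nat.le_one_iff_eq_zero_or_eq_one.mp hd0c with h0|h1
    · -- d0 = 0 : V + W = U
      have hd00 : d0 = 0 := Multiset.card_eq_zero.mp h0
      have hsum2 : V + W = U := by
        have := hsum_ed
        rw [hesum, hdsum, hd00, Multiset.sum_zero, add_zero] at this
        exact this
      have hVU : V ≤ U := hsum2 ▸ self_le_add_right V W
      have hVeq : V = U := hU.2.2 V hVU hVatom.1 hVatom.2.1
      have hW0 : W = 0 := by
        have : V + W = V + 0 := by rw [add_zero, hsum2, hVeq]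
        exact add_left_cancel this
      exact hWatom.1 hW0
    · -- d0 = {Y} : V + W = U + Y
      obtain ⟨Y, hY⟩ := Multiset.card_eq_one.mp h1
      have hYz' : Y ∈ z' := Multiset.mem_of_le hdz (by rw [hd0, hY]; simp)
      have hYatom := hz'.1 Y hYz'
      have hsum2 : V + W = U + Y := by
        have := hsum_ed
        rw [hesum, hdsum, hY, Multiset.sum_singleton] at this
        exact this
      rcases pairU U (atom_mem hU) Y (atom_mem hYatom) V (atom_mem hVatom) W
          (atom_mem hWatom) hsum2 with h|h
      · exact hUz (h ▸ hVz)
      · exact hUz (h ▸ hWz)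

/-- Upper bound helper in the case `U = {x, x}`. -/
lemma upper_double (x y w : GG)
    (hxx : IsMinZeroSum ({x,x} : Multiset GG))
    (hyy : IsMinZeroSum ({y,y} : Multiset GG)) (hww : IsMinZeroSum ({w,w} : Multiset GG))
    (hsatom : IsMinZeroSum ({x,y,w} : Multiset GG))
    (hcnt : ∀ V : Multiset GG, IsMinZeroSum V → V ≠ {x,x} →
      Multiset.count x V = if V = ({x,y,w} : Multiset GG) then 1 else 0)
    (A : Multiset GG) (z : Multiset (Multiset GG)) (hz : IsFactorization A z)
    (hUz : ({x,x} : Multiset GG) ∉ z) (hUA : ({x,x} : Multiset GG) ≤ A) :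
    ∃ z'', IsFactorization A z'' ∧ ({x,x} : Multiset GG) ∈ z'' ∧ factDist z z'' ≤ 3 := by
  classical
  have hcA : 2 ≤ A.count x := by
    have h1 := Multiset.count_le_of_le x hUA
    have h2 : Multiset.count x ({x,x} : Multiset GG) = 2 := by
      simp [Multiset.insert_eq_cons]
    omega
  have hmap : z.map (Multiset.count x)
      = z.map (fun V => if V = ({x,y,w} : Multiset GG) then 1 else 0) :=
    Multiset.map_congr rfl (fun V hV => hcnt V (hz.1 V hV) (fun h => hUz (h ▸ hV)))
  have hcount : 2 ≤ z.count ({x,y,w} : Multiset GG) := by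
    have hc := count_msum x z
    rw [hz.2, hmap, sum_indicator] at hc
    omega
  have hle : ({({x,y,w} : Multiset GG), {x,y,w}} : Multiset (Multiset GG)) ≤ z := by
    rw [Multiset.le_iff_count]
    intro V
    by_cases hV : V = ({x,y,w} : Multiset GG)
    · subst hV
      have h2 : Multiset.count ({x,y,w} : Multiset GG)
          ({({x,y,w} : Multiset GG), {x,y,w}} : Multiset (Multiset GG)) = 2 := by
        simp [Multiset.insert_eq_cons]
      omega
    · have h0 : Multiset.count V ({({x,y,w} : Multiset GG), {x,y,w}} : Multiset (Multiset GG)) = 0 := by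
        rw [Multiset.count_eq_zero]
        intro hmem
        simp only [Multiset.insert_eq_cons, Multiset.mem_cons, Multiset.mem_singleton] at hmem
        rcases hmem with h|h <;> exact hV h
      omega
  have hzt : ({({x,y,w} : Multiset GG), {x,y,w}} : Multiset (Multiset GG))
      + (z - {({x,y,w} : Multiset GG), {x,y,w}}) = z := by
    rw [add_comm]; exact tsub_add_cancel_of_le hle
  refine ⟨({({x,x} : Multiset GG), {y,y}, {w,w}} : Multiset (Multiset GG))
      + (z - {({x,y,w} : Multiset GG), {x,y,w}}), ⟨?_, ?_⟩, ?_, ?_⟩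
  · intro V hV
    rw [Multiset.mem_add] at hV
    rcases hV with hV|hV
    · have : V = {x,x} ∨ V = {y,y} ∨ V = {w,w} := by
        simpa [Multiset.insert_eq_cons] using hV
      rcases this with rfl|rfl|rfl
      exacts [hxx, hyy, hww]
    · exact hz.1 V (Multiset.mem_of_le tsub_le_self hV)
  · rw [Multiset.sum_add]
    have h1 : ({({x,x} : Multiset GG), {y,y}, {w,w}} : Multiset (Multiset GG)).sum
        = ({({x,y,w} : Multiset GG), {x,y,w}} : Multiset (Multiset GG)).sum := by
      simp only [Multiset.insert_eq_cons, Multiset.sum_cons, Multiset.sum_singleton]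
      rw [← add_assoc]
      exact trip_eq x y w
    rw [h1, ← Multiset.sum_add, hzt]
    exact hz.2
  · simp [Multiset.insert_eq_cons]
  · have key := factDist_add_le ({({x,y,w} : Multiset GG), {x,y,w}})
      ({({x,x} : Multiset GG), {y,y}, {w,w}}) (z - {({x,y,w} : Multiset GG), {x,y,w}})
    rw [hzt] at key
    refine le_trans key ?_
    simp [Multiset.insert_eq_cons]

/-- Upper bound: from any factorization one can reach one containing `U`
within distance 3. -/
lemma upper (A U : Multiset GG) (hU : IsMinZeroSum U) (z : Multiset (Multiset GG))
    (hz : IsFactorization A z) (hex : ∃ z', IsFactorization A z' ∧ U ∈ z') :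
    ∃ z'', IsFactorization A z'' ∧ U ∈ z'' ∧ factDist z z'' ≤ 3 := by
  classical
  obtain ⟨z', hz', hUz'⟩ := hex
  by_cases hUz : U ∈ z
  · exact ⟨z, hz, hUz, by rw [factDist_self]; omega⟩
  have hUA : U ≤ A := hz'.2 ▸ Multiset.le_sum_of_mem hUz'
  have hcnt_fact : ∀ x y w : GG, (∀ V ∈ olist, V ≠ ({x,x} : Multiset GG) →
        Multiset.count x V = if V = ({x,y,w} : Multiset GG) then 1 else 0) →
      ∀ V : Multiset GG, IsMinZeroSum V → V ≠ ({x,x} : Multiset GG) →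
        Multiset.count x V = if V = ({x,y,w} : Multiset GG) then 1 else 0 :=
    fun x y w hall V hV => hall V (atom_mem hV)
  rcases (classify U).mp hU with rfl|rfl|rfl|rfl|rfl
  · -- U = mo
    exfalso
    have h0A : (0 : GG) ∈ A := Multiset.mem_of_le hUA (by simp)
    rw [← hz.2] at h0A
    obtain ⟨V, hVz, h0V⟩ := mem_msum h0A
    have hVmo : V = mo := by
      rcases (classify V).mp (hz.1 V hVz) with rfl|rfl|rfl|rfl|rfl
      · rfl
      all_goals exact absurd h0V (by decide)
    exact hUz (hVmo ▸ hVz)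
  · exact upper_double va vb vc (by rw [isMin_iff]; decide) (by rw [isMin_iff]; decide)
      (by rw [isMin_iff]; decide) (by rw [isMin_iff]; decide)
      (hcnt_fact va vb vc (by decide)) A z hz hUz hUA
  · exact upper_double vb va vc (by rw [isMin_iff]; decide) (by rw [isMin_iff]; decide)
      (by rw [isMin_iff]; decide) (by rw [isMin_iff]; decide)
      (hcnt_fact vb va vc (by decide)) A z hz hUz hUA
  · exact upper_double vc va vb (by rw [isMin_iff]; decide) (by rw [isMin_iff]; decide)
      (by rw [isMin_iff]; decide) (by rw [isMin_iff]; decide)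
      (hcnt_fact vc va vb (by decide)) A z hz hUz hUA
  · -- U = ms
    have hget : ∀ x : GG, (∀ V ∈ olist, x ∈ V → V = ({x,x} : Multiset GG) ∨ V = ms) →
        x ∈ (ms : Multiset GG) → ({x,x} : Multiset GG) ∈ z := by
      intro x hclass hxms
      have hxA : x ∈ A := Multiset.mem_of_le hUA hxms
      rw [← hz.2] at hxA
      obtain ⟨V, hVz, hxV⟩ := mem_msum hxA
      rcases hclass V (atom_mem (hz.1 V hVz)) hxV with rfl|rfl
      · exact hVz
      · exact absurd hVz hUz
    have hpa : mp ∈ z := hget va (by decide) (by decide)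
    have hpb : mq ∈ z := hget vb (by decide) (by decide)
    have hpc : mr ∈ z := hget vc (by decide) (by decide)
    have hle : ({mp, mq, mr} : Multiset (Multiset GG)) ≤ z := by
      rw [Multiset.le_iff_count]
      intro V
      by_cases h1 : V = mp
      · subst h1
        have h2 : Multiset.count mp ({mp, mq, mr} : Multiset (Multiset GG)) = 1 := by decide
        have h3 := Multiset.count_pos.mpr hpa
        omega
      by_cases h2 : V = mq
      · subst h2
        have h2' : Multiset.count mq ({mp, mq, mr} : Multiset (Multiset GG)) = 1 := by decide
        have h3 := Multiset.count_pos.mpr hpb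
        omega
      by_cases h3 : V = mr
      · subst h3
        have h2' : Multiset.count mr ({mp, mq, mr} : Multiset (Multiset GG)) = 1 := by decide
        have h3' := Multiset.count_pos.mpr hpc
        omega
      · have h0 : Multiset.count V ({mp, mq, mr} : Multiset (Multiset GG)) = 0 := by
          rw [Multiset.count_eq_zero]
          intro hmem
          simp only [Multiset.insert_eq_cons, Multiset.mem_cons, Multiset.mem_singleton] at hmem
          rcases hmem with h|h|h
          exacts [h1 h, h2 h, h3 h]
        omega
    have hzt : ({mp, mq, mr} : Multiset (Multiset GG)) + (z - {mp, mq, mr}) = z := by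
      rw [add_comm]; exact tsub_add_cancel_of_le hle
    refine ⟨({ms, ms} : Multiset (Multiset GG)) + (z - {mp, mq, mr}), ⟨?_, ?_⟩, ?_, ?_⟩
    · intro V hV
      rw [Multiset.mem_add] at hV
      rcases hV with hV|hV
      · have : V = ms := by
          rcases Multiset.mem_cons.mp hV with h|h
          · exact h
          · simpa using h
        subst this
        rw [isMin_iff]; decide
      · exact hz.1 V (Multiset.mem_of_le tsub_le_self hV)
    · rw [Multiset.sum_add]
      have h1 : ({ms, ms} : Multiset (Multiset GG)).sum
          = ({mp, mq, mr} : Multiset (Multiset GG)).sum := by decide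
      rw [h1, ← Multiset.sum_add, hzt]
      exact hz.2
    · simp [Multiset.insert_eq_cons]
    · have key := factDist_add_le ({mp, mq, mr}) ({ms, ms}) (z - {mp, mq, mr})
      rw [hzt] at key
      refine le_trans key ?_
      decide

/-- The defining set for `tameDeg`. -/
def TS (A U : Multiset GG) : Set ℕ :=
  {N : ℕ | ∀ z, IsFactorization A z →
    (∃ z', IsFactorization A z' ∧ U ∈ z') →
    ∃ z', IsFactorization A z' ∧ U ∈ z' ∧ factDist z z' ≤ N}

lemma tameDeg_eq (A U : Multiset GG) : tameDeg A U = sInf (TS A U) := rfl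

lemma three_mem_TS (A U : Multiset GG) (hU : IsMinZeroSum U) : 3 ∈ TS A U :=
  fun z hz hex => upper A U hU z hz hex

end Stmt10Aux

theorem stmt10 : TaSet (ZMod 2 × ZMod 2) = {3} := by
  classical
  ext n
  simp only [TaSet, Set.mem_setOf_eq, Set.mem_singleton_iff]
  constructor
  · rintro ⟨hn, A, U, hA, hU, htame⟩
    have h3S := Stmt10Aux.three_mem_TS A U hU
    have hle3 : tameDeg A U ≤ 3 := by
      rw [Stmt10Aux.tameDeg_eq]; exact Nat.sInf_le h3S
    have hmem : tameDeg A U ∈ Stmt10Aux.TS A U := by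
      rw [Stmt10Aux.tameDeg_eq]; exact Nat.sInf_mem ⟨3, h3S⟩
    have hnot : (tameDeg A U - 1) ∉ Stmt10Aux.TS A U := by
      rw [Stmt10Aux.tameDeg_eq]
      apply Nat.notMem_of_lt_sInf
      rw [← Stmt10Aux.tameDeg_eq]
      omega
    simp only [Stmt10Aux.TS, Set.mem_setOf_eq, not_forall] at hnot
    obtain ⟨z, hz, hex, hbad⟩ := hnot
    push_neg at hbad
    have hUz : U ∉ z := by
      intro hUzmem
      have hb := hbad z hz hUzmem
      rw [Stmt10Aux.factDist_self] at hb
      omega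
    obtain ⟨z', hz', hUz'⟩ := hex
    obtain ⟨z'', hz'', hUz'', hdist⟩ := hmem z hz ⟨z', hz', hUz'⟩
    have hge := Stmt10Aux.dist_ge hU hz hz'' hUz hUz''
    omega
  · rintro rfl
    have hms : IsMinZeroSum (Stmt10Aux.ms) := by
      rw [Stmt10Aux.isMin_iff]; decide
    refine ⟨by norm_num, ({Stmt10Aux.va, Stmt10Aux.va, Stmt10Aux.vb, Stmt10Aux.vb,
      Stmt10Aux.vc, Stmt10Aux.vc} : Multiset Stmt10Aux.GG), Stmt10Aux.ms, by decide, hms, ?_⟩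
    set A : Multiset Stmt10Aux.GG := {Stmt10Aux.va, Stmt10Aux.va, Stmt10Aux.vb, Stmt10Aux.vb,
      Stmt10Aux.vc, Stmt10Aux.vc} with hA
    have h3S := Stmt10Aux.three_mem_TS A Stmt10Aux.ms hms
    have hz0 : IsFactorization A ({Stmt10Aux.mp, Stmt10Aux.mq, Stmt10Aux.mr} :
        Multiset (Multiset Stmt10Aux.GG)) := by
      constructor
      · intro V hV
        have : V = Stmt10Aux.mp ∨ V = Stmt10Aux.mq ∨ V = Stmt10Aux.mr := by
          simpa [Multiset.insert_eq_cons] using hV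
        rcases this with rfl|rfl|rfl <;> (rw [Stmt10Aux.isMin_iff]; decide)
      · decide
    have hz1 : IsFactorization A ({Stmt10Aux.ms, Stmt10Aux.ms} :
        Multiset (Multiset Stmt10Aux.GG)) := by
      constructor
      · intro V hV
        have : V = Stmt10Aux.ms := by
          rcases Multiset.mem_cons.mp hV with h|h
          · exact h
          · simpa using h
        subst this; exact hms
      · decide
    rw [Stmt10Aux.tameDeg_eq]
    apply le_antisymm
    · exact Nat.sInf_le h3S
    · have hmem := Nat.sInf_mem (⟨3, h3S⟩ : (Stmt10Aux.TS A Stmt10Aux.ms).Nonempty)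
      obtain ⟨z'', hz'', hU'', hd⟩ := hmem ({Stmt10Aux.mp, Stmt10Aux.mq, Stmt10Aux.mr})
        hz0 ⟨({Stmt10Aux.ms, Stmt10Aux.ms}), hz1, by simp [Multiset.insert_eq_cons]⟩
      have hge := Stmt10Aux.dist_ge hms hz0 hz'' (by decide) hU''
      omega
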